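/- Let n be a positive integer and let Φ : M_n → M_n be a mixed-unitary quantum channel with mixed-unitary rank N and Choi rank r. Then N ≤ r² − r + 1. -/

import Mathlib

open scoped Kronecker ComplexOrder
open Matrix

/-- Square complex matrices indexed by `α`. -/
abbrev Mat (α : Type*) := Matrix α α ℂ

/-- The Choi matrix `J(Φ) = ∑_{j,k} Φ(E_{j,k}) ⊗ E_{j,k}` of a linear map between
matrix spaces. -/
noncomputable def choiMatrix {α β : Type*} [Fintype α] [DecidableEq α]
    (Φ : Mat α →ₗ[ℂ] Mat β) : Matrix (β × α) (β × α) ℂ :=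
  ∑ j : α, ∑ k : α, (Φ (Matrix.single j k 1)) ⊗ₖ (Matrix.single j k 1)

/-- The Choi rank of a linear map: the rank of its Choi matrix. -/
noncomputable def choiRank {α β : Type*} [Fintype α] [DecidableEq α] [Fintype β]
    (Φ : Mat α →ₗ[ℂ] Mat β) : ℕ :=
  (choiMatrix Φ).rank

/-- `A` is a Kraus representation of `Φ` (with the trace-preservation condition). -/
def IsKrausRep {α β : Type*} [Fintype α] [DecidableEq α] [Fintype β] {r : ℕ}
    (Φ : Mat α →ₗ[ℂ] Mat β) (A : Fin r → Matrix β α ℂ) : Prop :=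
  (∀ X, Φ X = ∑ k, A k * X * (A k)ᴴ) ∧ (∑ k, (A k)ᴴ * A k = 1)

/-- A quantum channel: a linear map admitting a Kraus representation
`Φ(X) = ∑ₖ Aₖ X Aₖ*` with `∑ₖ Aₖ* Aₖ = 1`. -/
def IsChannel {α β : Type*} [Fintype α] [DecidableEq α] [Fintype β]
    (Φ : Mat α →ₗ[ℂ] Mat β) : Prop :=
  ∃ (r : ℕ) (A : Fin r → Matrix β α ℂ), IsKrausRep Φ A

/-- The dimension of the operator system `span{Aⱼᴴ Aₖ}` generated by a Kraus family. -/
noncomputable def krausOpSystemDim {α β : Type*} [Fintype α] [Fintype β] {r : ℕ}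
    (A : Fin r → Matrix β α ℂ) : ℕ :=
  Module.finrank ℂ (Submodule.span ℂ {M : Mat α | ∃ j k, M = (A j)ᴴ * A k})

/-- A mixed-unitary decomposition of `Φ` with `N` terms: a probability vector `p`
and unitaries `U` with `Φ(X) = ∑ₖ pₖ Uₖ X Uₖ*`. -/
def IsMixedUnitaryDecomp {α : Type*} [Fintype α] [DecidableEq α] {N : ℕ}
    (Φ : Mat α →ₗ[ℂ] Mat α) (p : Fin N → ℝ) (U : Fin N → Mat α) : Prop :=
  (∀ k, 0 ≤ p k) ∧ (∑ k, p k = 1) ∧ (∀ k, U k ∈ Matrix.unitaryGroup α ℂ) ∧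
    (∀ X, Φ X = ∑ k, (p k : ℂ) • (U k * X * (U k)ᴴ))

/-- `Φ` is a mixed-unitary channel. -/
def IsMixedUnitary {α : Type*} [Fintype α] [DecidableEq α]
    (Φ : Mat α →ₗ[ℂ] Mat α) : Prop :=
  ∃ (N : ℕ) (p : Fin N → ℝ) (U : Fin N → Mat α), IsMixedUnitaryDecomp Φ p U

/-- The mixed-unitary rank: the minimum number of unitary conjugations in a
mixed-unitary decomposition. -/
noncomputable def mixedUnitaryRank {α : Type*} [Fintype α] [DecidableEq α]
    (Φ : Mat α →ₗ[ℂ] Mat α) : ℕ :=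
  sInf {N : ℕ | ∃ (p : Fin N → ℝ) (U : Fin N → Mat α), IsMixedUnitaryDecomp Φ p U}

/-- A mixed-unitary decomposition is the *unique* mixed-unitary decomposition of `Φ` if
every other mixed-unitary decomposition of `Φ` arises by partitioning its terms into
groups of phase-multiples of the `Uₖ` with matching total probabilities. -/
def IsUniqueMixedUnitaryDecomp {α : Type*} [Fintype α] [DecidableEq α] {N : ℕ}
    (Φ : Mat α →ₗ[ℂ] Mat α) (p : Fin N → ℝ) (U : Fin N → Mat α) : Prop :=
  IsMixedUnitaryDecomp Φ p U ∧
    ∀ (t : ℕ) (q : Fin t → ℝ) (V : Fin t → Mat α), IsMixedUnitaryDecomp Φ q V →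
      ∃ T : Fin t → Fin N,
        (∀ j, ∃ c : ℂ, ‖c‖ = 1 ∧ V j = c • U (T j)) ∧
        (∀ k, p k = ∑ j ∈ Finset.univ.filter (fun j => T j = k), q j)

/-- `Φ` possesses a unique mixed-unitary decomposition. -/
def HasUniqueMixedUnitaryDecomp {α : Type*} [Fintype α] [DecidableEq α]
    (Φ : Mat α →ₗ[ℂ] Mat α) : Prop :=
  ∃ (N : ℕ) (p : Fin N → ℝ) (U : Fin N → Mat α), IsUniqueMixedUnitaryDecomp Φ p U

/-- `Ψ : M_α → M_N` is complementary to `Φ : M_α → M_α`: there is a Kraus representation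
`Φ(X) = ∑ₖ Bₖ X Bₖ*` with `N` terms such that `Ψ(X)` has `(j,k)` entry `⟨Bₖ* Bⱼ, X⟩`. -/
def IsComplementary {α : Type*} [Fintype α] [DecidableEq α] {N : ℕ}
    (Φ : Mat α →ₗ[ℂ] Mat α) (Ψ : Mat α →ₗ[ℂ] Mat (Fin N)) : Prop :=
  ∃ B : Fin N → Mat α, IsKrausRep Φ B ∧
    ∀ X, Ψ X = Matrix.of fun j k => ((((B k)ᴴ * B j)ᴴ) * X).trace

/-- A unitary channel: conjugation by a fixed unitary matrix. -/
def IsUnitaryChannel {α : Type*} [Fintype α] [DecidableEq α]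
    (Ψ : Mat α →ₗ[ℂ] Mat α) : Prop :=
  ∃ U ∈ Matrix.unitaryGroup α ℂ, ∀ X, Ψ X = U * X * Uᴴ

/-- A correlation matrix: positive semidefinite with unit diagonal. -/
def IsCorrelation {α : Type*} [Fintype α] (C : Mat α) : Prop :=
  C.PosSemidef ∧ ∀ i, C i i = 1

/-- A toroidal decomposition of `C` with `N` terms: `C = ∑ₖ pₖ uₖ uₖ*` where each `uₖ`
has all entries of modulus one. -/
def IsToroidalDecomp {α : Type*} [Fintype α] {N : ℕ}
    (C : Mat α) (p : Fin N → ℝ) (u : Fin N → α → ℂ) : Prop :=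
  (∀ k, 0 ≤ p k) ∧ (∑ k, p k = 1) ∧ (∀ k i, ‖u k i‖ = 1) ∧
    C = ∑ k, (p k : ℂ) • Matrix.vecMulVec (u k) (star (u k))

/-- A correlation matrix is toroidal if it is a convex combination of rank-one
correlation matrices `u u*` with `u` having unimodular entries. -/
def IsToroidal {α : Type*} [Fintype α] (C : Mat α) : Prop :=
  ∃ (N : ℕ) (p : Fin N → ℝ) (u : Fin N → α → ℂ), IsToroidalDecomp C p u

/-- The toroidal rank of a correlation matrix. -/
noncomputable def toroidalRank {α : Type*} [Fintype α] (C : Mat α) : ℕ :=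
  sInf {N : ℕ | ∃ (p : Fin N → ℝ) (u : Fin N → α → ℂ), IsToroidalDecomp C p u}

section AuxStmt2

variable {n : ℕ}

/-- The conjugation map `X ↦ B X Cᴴ` as a `ℂ`-linear map. -/
noncomputable def conjM (B C : Mat (Fin n)) : Mat (Fin n) →ₗ[ℂ] Mat (Fin n) where
  toFun X := B * X * Cᴴ
  map_add' X Y := by simp [Matrix.mul_add, Matrix.add_mul]
  map_smul' c X := by simp [Matrix.mul_smul, Matrix.smul_mul]

@[simp] lemma conjM_apply (B C X : Mat (Fin n)) : conjM B C X = B * X * Cᴴ := rfl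

/-- `M ↦ ∑ᵢⱼ Mᵢⱼ • (X ↦ βᵢ X βⱼᴴ)` as a real-linear map. -/
noncomputable def Gmap {r : ℕ} (β : Fin r → Mat (Fin n)) :
    Matrix (Fin r) (Fin r) ℂ →ₗ[ℝ] (Mat (Fin n) →ₗ[ℂ] Mat (Fin n)) where
  toFun M := ∑ i, ∑ j, M i j • conjM (β i) (β j)
  map_add' M M' := by
    simp [Matrix.add_apply, add_smul, Finset.sum_add_distrib]
  map_smul' c M := by
    simp only [Matrix.smul_apply, RingHom.id_apply, Finset.smul_sum]
    refine Finset.sum_congr rfl fun i _ => Finset.sum_congr rfl fun j _ => ?_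
    rw [smul_assoc]

lemma Gmap_vecMulVec {r : ℕ} (β : Fin r → Mat (Fin n)) (d e : Fin r → ℂ) :
    Gmap β (Matrix.vecMulVec d (star e)) = conjM (∑ i, d i • β i) (∑ j, e j • β j) := by
  apply LinearMap.ext; intro X
  simp only [Gmap, LinearMap.coe_mk, AddHom.coe_mk, LinearMap.sum_apply, LinearMap.smul_apply,
    conjM_apply, vecMulVec_apply, Pi.star_apply]
  rw [conjTranspose_sum]
  simp only [conjTranspose_smul, Finset.sum_mul, Finset.mul_sum, Matrix.smul_mul, Matrix.mul_smul,
    smul_smul]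
  rw [Finset.sum_comm]
  refine Finset.sum_congr rfl fun j _ => Finset.sum_congr rfl fun i _ => ?_
  rw [mul_comm]

/-- Real-linear parametrization of Hermitian matrices by real matrices. -/
noncomputable def Pherm (r : ℕ) : Matrix (Fin r) (Fin r) ℝ →ₗ[ℝ] Matrix (Fin r) (Fin r) ℂ where
  toFun R := Matrix.of fun i j =>
    if i = j then (R i i : ℂ)
    else if i < j then (R i j : ℂ) + (R j i : ℂ) * Complex.I
    else (R j i : ℂ) - (R i j : ℂ) * Complex.I
  map_add' R S := by
    ext i j
    by_cases h : i = j <;> by_cases h' : i < j <;>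
      simp [h, h', Matrix.add_apply] <;> push_cast <;> ring
  map_smul' c R := by
    ext i j
    by_cases h : i = j <;> by_cases h' : i < j <;>
      simp [h, h', Matrix.smul_apply, Complex.real_smul] <;> push_cast <;> ring

lemma Pherm_surj {r : ℕ} (M : Matrix (Fin r) (Fin r) ℂ) (hM : Mᴴ = M) :
    ∃ R, Pherm r R = M := by
  refine ⟨Matrix.of fun i j =>
    if i < j then (M i j).re else if j < i then (M j i).im else (M i i).re, ?_⟩
  have herm : ∀ i j, (starRingEnd ℂ) (M j i) = M i j := by
    intro i j
    simpa [Matrix.conjTranspose_apply] using congrFun (congrFun hM i) j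
  ext i j
  rcases lt_trichotomy i j with h | h | h
  · have h1 : ¬ i = j := Fin.ne_of_lt h
    have h2 : ¬ j < i := by omega
    simp only [Pherm, LinearMap.coe_mk, AddHom.coe_mk, Matrix.of_apply, if_neg h1, if_pos h,
      if_neg h2]
    exact Complex.re_add_im _
  · subst h
    have hre : (M i i).im = 0 := by
      have h2 := congrArg Complex.im (herm i i)
      simp at h2; linarith
    simp only [Pherm, LinearMap.coe_mk, AddHom.coe_mk, Matrix.of_apply, if_pos rfl,
      lt_irrefl, if_neg (lt_irrefl i)]
    rw [← Complex.re_add_im (M i i), hre]; simp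
  · have h1 : ¬ i = j := by omega
    have h2 : ¬ i < j := by omega
    simp only [Pherm, LinearMap.coe_mk, AddHom.coe_mk, Matrix.of_apply, if_neg h1, if_neg h2,
      if_pos h]
    rw [← herm i j]
    apply Complex.ext <;> simp

lemma vecMulVec_conjT {r : ℕ} (a b : Fin r → ℂ) :
    (Matrix.vecMulVec a (star b))ᴴ = Matrix.vecMulVec b (star a) := by
  ext i j
  simp [Matrix.vecMulVec_apply, Matrix.conjTranspose_apply, mul_comm]

/-- Evaluation at `1` as a real-linear map. -/
noncomputable def ev1 : (Mat (Fin n) →ₗ[ℂ] Mat (Fin n)) →ₗ[ℝ] Mat (Fin n) where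
  toFun T := T 1
  map_add' T S := rfl
  map_smul' a T := rfl

/-- The affine-constraint map. -/
noncomputable def Lam {r : ℕ} (β : Fin r → Mat (Fin n)) :
    (Matrix (Fin r) (Fin r) ℝ × ℝ) →ₗ[ℝ] Mat (Fin n) :=
  (ev1.comp ((Gmap β).comp (Pherm r))).comp (LinearMap.fst ℝ _ _)
    - (LinearMap.toSpanSingleton ℝ _ (1 : Mat (Fin n))).comp (LinearMap.snd ℝ _ _)

lemma Lam_apply {r : ℕ} (β : Fin r → Mat (Fin n)) (R : Matrix (Fin r) (Fin r) ℝ) (t : ℝ) :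
    Lam β (R, t) = (Gmap β (Pherm r R)) 1 - t • (1 : Mat (Fin n)) := rfl

lemma quad_mono {a b : ℕ} (h : a ≤ b) : a * a - a + 1 ≤ b * b - b + 1 := by
  have h2 : a * a ≤ b * b := Nat.mul_le_mul h h
  have h3 : a ≤ a * a := by nlinarith
  have h4 : b ≤ b * b := by nlinarith
  zify [h3, h4]; nlinarith

lemma coe_smul_mat (a : ℝ) (A : Mat (Fin n)) : (a : ℂ) • A = a • A := by
  rw [← algebraMap_smul ℂ a A]; norm_num

set_option maxHeartbeats 2000000 in
lemma lemC {s r' : ℕ} (V : Fin s → Mat (Fin n))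
    (hUni : ∀ k, V k ∈ Matrix.unitaryGroup (Fin n) ℂ)
    (hr' : Module.finrank ℂ (Submodule.span ℂ (Set.range V)) ≤ r')
    (hs : r' * r' - r' + 1 < s) :
    ∃ c : Fin s → ℝ, (∃ k, c k ≠ 0) ∧ (∑ k, c k = 0) ∧
      ∀ X, ∑ k, (c k : ℂ) • (V k * X * (V k)ᴴ) = 0 := by
  classical
  set W : Submodule ℂ (Mat (Fin n)) := Submodule.span ℂ (Set.range V) with hW
  set r₀ : ℕ := Module.finrank ℂ W with hr₀
  have hs' : r₀ * r₀ - r₀ + 1 < s := lt_of_le_of_lt (quad_mono hr') hs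
  have hspos : 0 < s := by omega
  obtain ⟨B⟩ : Nonempty (Module.Basis (Fin r₀) ℂ W) := ⟨Module.finBasis ℂ W⟩
  have hmem : ∀ k, V k ∈ W := fun k => Submodule.subset_span ⟨k, rfl⟩
  set β : Fin r₀ → Mat (Fin n) := fun i => (B i : Mat (Fin n)) with hβ
  set cc : Fin s → Fin r₀ → ℂ := fun k i => B.repr ⟨V k, hmem k⟩ i with hcc
  have hsum : ∀ (x : Mat (Fin n)) (hx : x ∈ W), ∑ i, (B.repr ⟨x, hx⟩ i) • β i = x := by
    intro x hx
    have h := B.sum_repr ⟨x, hx⟩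
    calc ∑ i, (B.repr ⟨x, hx⟩ i) • β i
        = ((∑ i, B.repr ⟨x, hx⟩ i • B i : W) : Mat (Fin n)) := by
          simp only [hβ, Submodule.coe_sum, Submodule.coe_smul]
      _ = x := by rw [h]
  set M : Fin s → Matrix (Fin r₀) (Fin r₀) ℂ :=
    fun k => Matrix.vecMulVec (cc k) (star (cc k)) with hM
  set T : Fin s → (Mat (Fin n) →ₗ[ℂ] Mat (Fin n)) := fun k => conjM (V k) (V k) with hT
  have hGm : ∀ k, Gmap β (M k) = T k := by
    intro k
    rw [hM, Gmap_vecMulVec, hsum (V k) (hmem k)]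
  have hU1 : ∀ k, V k * (V k)ᴴ = 1 := by
    intro k
    have := (Matrix.mem_unitaryGroup_iff.mp (hUni k))
    exact this
  have hU2 : ∀ k, (V k)ᴴ * V k = 1 := by
    intro k
    have := (Matrix.mem_unitaryGroup_iff'.mp (hUni k))
    exact this
  -- choose real parametrizations
  have hMherm : ∀ k, (M k)ᴴ = M k := fun k => vecMulVec_conjT _ _
  choose R hR using fun k => Pherm_surj (M k) (hMherm k)
  -- membership in the kernel of `Lam β`
  have hker : ∀ k, (R k, (1:ℝ)) ∈ LinearMap.ker (Lam β) := by
    intro k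
    rw [LinearMap.mem_ker, Lam_apply, hR, hGm]
    simp [hT, hU1 k]
  -- the auxiliary real-linear map ψ
  set U₀ : Mat (Fin n) := V ⟨0, hspos⟩ with hU₀
  set ψ : Mat (Fin n) →ₗ[ℝ] Mat (Fin n) :=
    { toFun := fun C => C * U₀ᴴ + U₀ * Cᴴ
      map_add' := by
        intro C D
        simp only [Matrix.add_mul, Matrix.mul_add, Matrix.conjTranspose_add]
        abel
      map_smul' := by
        intro a C
        simp [Matrix.smul_mul, Matrix.mul_smul, Matrix.conjTranspose_smul, smul_add] } with hψ
  have hψap : ∀ C, ψ C = C * U₀ᴴ + U₀ * Cᴴ := fun C => rfl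
  haveI : FiniteDimensional ℝ W := Module.Finite.trans (R := ℝ) ℂ W
  have hWr : Module.finrank ℝ W = 2 * r₀ := by
    rw [← Module.finrank_mul_finrank ℝ ℂ W, Complex.finrank_real_complex]
  set f : W →ₗ[ℝ] Mat (Fin n) := ψ.comp ((W.subtype).restrictScalars ℝ) with hf
  have hfap : ∀ x : W, f x = ψ (x : Mat (Fin n)) := fun x => rfl
  -- the kernel of f has dimension at most r₀
  set σ : W ≃ₗ[ℝ] W :=
    { toFun := fun x => Complex.I • x
      invFun := fun x => (-Complex.I) • x
      map_add' := fun x y => smul_add _ x y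
      map_smul' := fun a x => smul_comm _ a x
      left_inv := by
        intro x; simp [smul_smul]
      right_inv := by
        intro x; simp [smul_smul] } with hσ
  have hKbound : Module.finrank ℝ (LinearMap.ker f) ≤ r₀ := by
    set K := LinearMap.ker f with hK
    set K' := K.map σ.toLinearMap with hK'
    have hdisj : K ⊓ K' = ⊥ := by
      rw [Submodule.eq_bot_iff]
      rintro x ⟨hx1, hx2⟩
      obtain ⟨y, hy, rfl⟩ := hx2
      have hy0 : (y : Mat (Fin n)) * U₀ᴴ + U₀ * (y : Mat (Fin n))ᴴ = 0 := by
        have := LinearMap.mem_ker.mp hy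
        rw [hfap] at this; rwa [hψap] at this
      have hx0 : (Complex.I • (y : Mat (Fin n))) * U₀ᴴ + U₀ * (Complex.I • (y : Mat (Fin n)))ᴴ = 0 := by
        have := LinearMap.mem_ker.mp hx1
        rw [hfap] at this; rw [hψap] at this
        exact this
      have h2 : U₀ * (y : Mat (Fin n))ᴴ = 0 := by
        have e1 : (y : Mat (Fin n)) * U₀ᴴ = -(U₀ * (y : Mat (Fin n))ᴴ) := by
          rw [eq_neg_iff_add_eq_zero]; exact hy0
        rw [Matrix.smul_mul, Matrix.conjTranspose_smul, e1] at hx0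
        have : Complex.I • -(U₀ * (y : Mat (Fin n))ᴴ)
            + (starRingEnd ℂ) Complex.I • (U₀ * (y : Mat (Fin n))ᴴ) = 0 := by
          rw [← Matrix.mul_smul]; exact hx0
        rw [Complex.conj_I] at this
        have h3 : (-(2*Complex.I)) • (U₀ * (y : Mat (Fin n))ᴴ) = 0 := by
          rw [← this]; simp [smul_smul]; module
        have h4 := congrArg (fun Z => (Complex.I/2) • Z) h3
        simpa [smul_smul] using h4
      have hyz : (y : Mat (Fin n)) = 0 := by
        have : (y : Mat (Fin n))ᴴ = 0 := by
          calc (y : Mat (Fin n))ᴴ = (U₀ᴴ * U₀) * (y : Mat (Fin n))ᴴ := by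
                rw [hU2 ⟨0, hspos⟩]; rw [Matrix.one_mul]
            _ = U₀ᴴ * (U₀ * (y : Mat (Fin n))ᴴ) := by rw [Matrix.mul_assoc]
            _ = 0 := by rw [h2, Matrix.mul_zero]
        simpa using congrArg Matrix.conjTranspose this
      have : y = 0 := Subtype.ext hyz
      subst this
      simp
    have hKK' : Module.finrank ℝ K' = Module.finrank ℝ K := by
      exact LinearEquiv.finrank_map_eq σ K
    have hsup : Module.finrank ℝ (K ⊔ K' : Submodule ℝ W) ≤ 2 * r₀ := by
      rw [← hWr]; exact Submodule.finrank_le _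
    have := Submodule.finrank_sup_add_finrank_inf_eq K K'
    rw [hdisj] at this
    simp at this
    omega
  -- the range of f is contained in the range of Lam β
  have hrange : LinearMap.range f ≤ LinearMap.range (Lam β) := by
    rintro z ⟨x, rfl⟩
    set d : Fin r₀ → ℂ := fun i => B.repr x i with hd
    set e₀ : Fin r₀ → ℂ := cc ⟨0, hspos⟩ with he₀
    set Mx : Matrix (Fin r₀) (Fin r₀) ℂ :=
      Matrix.vecMulVec d (star e₀) + Matrix.vecMulVec e₀ (star d) with hMx
    have hMxh : Mxᴴ = Mx := by
      rw [hMx, Matrix.conjTranspose_add, vecMulVec_conjT, vecMulVec_conjT, add_comm]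
    obtain ⟨Rx, hRx⟩ := Pherm_surj Mx hMxh
    refine ⟨(Rx, 0), ?_⟩
    rw [Lam_apply, hRx]
    have hdx : ∑ i, d i • β i = (x : Mat (Fin n)) := by
      have := hsum (x : Mat (Fin n)) x.2
      simpa [hd] using this
    have he₀x : ∑ i, e₀ i • β i = U₀ := hsum (V ⟨0, hspos⟩) (hmem ⟨0, hspos⟩)
    rw [hMx, map_add, Gmap_vecMulVec, Gmap_vecMulVec, hdx, he₀x]
    rw [hfap, hψap]
    simp [conjM]
  -- dimension chase
  have hrn := LinearMap.finrank_range_add_finrank_ker f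
  rw [hWr] at hrn
  have hr₀le : r₀ ≤ Module.finrank ℝ (LinearMap.range f) := by omega
  haveI : FiniteDimensional ℝ (Matrix (Fin r₀) (Fin r₀) ℝ × ℝ) := by infer_instance
  have hrangeLam : r₀ ≤ Module.finrank ℝ (LinearMap.range (Lam β)) :=
    le_trans hr₀le (Submodule.finrank_mono hrange)
  have hdom : Module.finrank ℝ (Matrix (Fin r₀) (Fin r₀) ℝ × ℝ) = r₀ * r₀ + 1 := by
    rw [Module.finrank_prod, Module.finrank_matrix]
    simp [Module.finrank_self]
  have hrn2 := LinearMap.finrank_range_add_finrank_ker (Lam β)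
  rw [hdom] at hrn2
  have hkerLam : Module.finrank ℝ (LinearMap.ker (Lam β)) ≤ r₀ * r₀ + 1 - r₀ := by omega
  -- the family of kernel vectors is linearly dependent
  set fam : Fin s → LinearMap.ker (Lam β) := fun k => ⟨(R k, (1:ℝ)), hker k⟩ with hfam
  have hnli : ¬ LinearIndependent ℝ fam := by
    intro hli
    have := hli.fintype_card_le_finrank
    rw [Fintype.card_fin] at this
    omega
  obtain ⟨g, hg0, k₁, hk₁⟩ := Fintype.not_linearIndependent_iff.mp hnli
  have hg0' : (∑ k, g k • ((R k, (1:ℝ)) : Matrix (Fin r₀) (Fin r₀) ℝ × ℝ)) = 0 := by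
    have := congrArg (Subtype.val) hg0
    simpa [hfam] using this
  have hgR : ∑ k, g k • R k = 0 := by
    have := congrArg Prod.fst hg0'
    simpa [Prod.fst_sum] using this
  have hgsum : ∑ k, g k = 0 := by
    have := congrArg Prod.snd hg0'
    simpa [Prod.snd_sum] using this
  have hgM : ∑ k, g k • M k = 0 := by
    have : ∑ k, g k • M k = Pherm r₀ (∑ k, g k • R k) := by
      rw [map_sum]
      refine Finset.sum_congr rfl fun k _ => ?_
      rw [_root_.map_smul, hR]
    rw [this, hgR, map_zero]
  have hgT : ∑ k, g k • T k = 0 := by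
    have : ∑ k, g k • T k = Gmap β (∑ k, g k • M k) := by
      rw [map_sum]
      refine Finset.sum_congr rfl fun k _ => ?_
      rw [_root_.map_smul, hGm]
    rw [this, hgM, map_zero]
  refine ⟨g, ⟨k₁, hk₁⟩, hgsum, ?_⟩
  intro X
  have := congrArg (fun (L : Mat (Fin n) →ₗ[ℂ] Mat (Fin n)) => L X) hgT
  simp only [LinearMap.sum_apply, LinearMap.smul_apply, LinearMap.zero_apply] at this
  rw [← this]
  refine Finset.sum_congr rfl fun k _ => ?_
  rw [coe_smul_mat]
  congr 1


/-- Flattening of a matrix to a vector, as a linear equivalence. -/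
noncomputable def flatL : Mat (Fin n) ≃ₗ[ℂ] ((Fin n × Fin n) → ℂ) where
  toFun A := fun x => A x.1 x.2
  invFun v := Matrix.of fun i j => v (i, j)
  map_add' A B := rfl
  map_smul' c A := rfl
  left_inv A := rfl
  right_inv v := rfl

lemma choiMatrix_entry (Φ : Mat (Fin n) →ₗ[ℂ] Mat (Fin n)) (a b c d : Fin n) :
    choiMatrix Φ (a, b) (c, d) = Φ (Matrix.single b d 1) a c := by
  simp only [choiMatrix, Matrix.sum_apply, Matrix.kroneckerMap_apply]
  rw [Finset.sum_eq_single b]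
  · rw [Finset.sum_eq_single d]
    · simp [Matrix.single]
    · intro k _ hk; simp [Matrix.single, hk]
    · simp
  · intro j _ hj
    apply Finset.sum_eq_zero
    intro k _
    simp [Matrix.single, hj]
  · simp

lemma conj_mul_E_conjT (U : Mat (Fin n)) (a b c d : Fin n) :
    ((U * Matrix.single b d 1 * Uᴴ) : Mat (Fin n)) a c = U a b * (starRingEnd ℂ) (U c d) := by
  rw [Matrix.mul_apply]
  have : ∀ y, ((U * Matrix.single b d 1 : Mat (Fin n))) a y * Uᴴ y c
      = (if y = d then U a b * (starRingEnd ℂ) (U c y) else 0) := by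
    intro y
    rw [Matrix.mul_apply, Matrix.conjTranspose_apply]
    by_cases hy : y = d
    · subst hy
      rw [Finset.sum_eq_single b]
      · simp [Matrix.single]
      · intro x _ hx; simp [Matrix.single, Ne.symm hx]
      · simp
    · simp only [if_neg hy]
      have : ∀ x, U a x * Matrix.single b d 1 x y = 0 := by
        intro x; simp [Matrix.single, Ne.symm hy]
      simp [this]
  simp only [this]
  simp

set_option maxHeartbeats 1000000 in
lemma choiRank_eq {N₀ : ℕ} (Φ : Mat (Fin n) →ₗ[ℂ] Mat (Fin n)) (p : Fin N₀ → ℝ)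
    (U : Fin N₀ → Mat (Fin n)) (hp : ∀ k, 0 ≤ p k)
    (hd : ∀ X, Φ X = ∑ k, (p k : ℂ) • (U k * X * (U k)ᴴ)) :
    choiRank Φ = Module.finrank ℂ (Submodule.span ℂ (U '' {k | p k ≠ 0})) := by
  classical
  set B : Matrix (Fin N₀) (Fin n × Fin n) ℂ :=
    Matrix.of fun k x => (Real.sqrt (p k) : ℂ) * (starRingEnd ℂ) (U k x.1 x.2) with hB
  have hcol : ∀ k, Bᴴᵀ k = (Real.sqrt (p k) : ℂ) • flatL (U k) := by
    intro k
    funext x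
    simp [hB, Matrix.conjTranspose_apply, flatL, mul_comm]
    exact mul_comm _ _
  have hfact : choiMatrix Φ = Bᴴ * B := by
    ext ⟨a, b⟩ ⟨c, d⟩
    rw [choiMatrix_entry, hd, Matrix.mul_apply]
    rw [Matrix.sum_apply]
    refine Finset.sum_congr rfl fun k _ => ?_
    rw [Matrix.smul_apply, conj_mul_E_conjT, Matrix.conjTranspose_apply]
    simp only [hB, Matrix.of_apply, star_mul', Complex.star_def, Complex.conj_conj,
      Complex.conj_ofReal, smul_eq_mul]
    have h2 : ((p k : ℝ) : ℂ) = ((Real.sqrt (p k) : ℂ)) * ((Real.sqrt (p k) : ℂ)) := by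
      rw [← Complex.ofReal_mul, Real.mul_self_sqrt (hp k)]
    rw [h2]; ring
  have hspan : Submodule.span ℂ (Set.range Bᴴᵀ)
      = Submodule.map (flatL.toLinearMap) (Submodule.span ℂ (U '' {k | p k ≠ 0})) := by
    rw [← Submodule.span_image]
    apply le_antisymm
    · rw [Submodule.span_le]
      rintro v ⟨k, rfl⟩
      by_cases hk : p k = 0
      · rw [SetLike.mem_coe, hcol k, hk]
        simp
      · rw [SetLike.mem_coe, hcol k]
        exact Submodule.smul_mem _ _
          (Submodule.subset_span ⟨U k, ⟨k, hk, rfl⟩, rfl⟩)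
    · rw [Submodule.span_le]
      rintro v ⟨A, ⟨k, hk, rfl⟩, rfl⟩
      have hne : ((Real.sqrt (p k) : ℂ)) ≠ 0 := by
        simp only [ne_eq, Complex.ofReal_eq_zero]
        exact Real.sqrt_ne_zero'.mpr (lt_of_le_of_ne (hp k) (Ne.symm hk))
      have : flatL.toLinearMap (U k) = ((Real.sqrt (p k) : ℂ))⁻¹ • (Bᴴᵀ k) := by
        rw [hcol k, inv_smul_smul₀ hne]; rfl
      rw [SetLike.mem_coe, this]
      exact Submodule.smul_mem _ _ (Submodule.subset_span ⟨k, rfl⟩)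
  rw [choiRank, hfact, Matrix.rank_conjTranspose_mul_self, ← Matrix.rank_conjTranspose,
    Matrix.rank_eq_finrank_span_cols,
    (show Submodule.span ℂ (Set.range Bᴴ.col) = _ from hspan), LinearEquiv.finrank_map_eq]

set_option maxHeartbeats 1000000 in
lemma reduce (Φ : Mat (Fin n) →ₗ[ℂ] Mat (Fin n)) (r : ℕ) :
    ∀ s N₀ (p : Fin N₀ → ℝ) (U : Fin N₀ → Mat (Fin n)),
      IsMixedUnitaryDecomp Φ p U →
      (Finset.univ.filter fun k => p k ≠ 0).card = s →
      Module.finrank ℂ (Submodule.span ℂ (U '' {k | p k ≠ 0})) ≤ r →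
      ∃ t, t ≤ r * r - r + 1 ∧ ∃ (q : Fin t → ℝ) (V : Fin t → Mat (Fin n)),
        IsMixedUnitaryDecomp Φ q V := by
  intro s
  induction s using Nat.strong_induction_on with
  | _ s ih =>
  intro N₀ p U hdec hcard hrk
  classical
  obtain ⟨hp0, hp1, hUuni, hΦX⟩ := hdec
  set F := (Finset.univ.filter fun k => p k ≠ 0) with hF
  have hFcard : Fintype.card F = s := by rw [Fintype.card_coe]; exact hcard
  set e : F ≃ Fin s := (Fintype.equivFin F).trans (finCongr hFcard) with he
  set q : Fin s → ℝ := fun i => p ((e.symm i) : Fin N₀) with hq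
  set V : Fin s → Mat (Fin n) := fun i => U ((e.symm i) : Fin N₀) with hV
  have hsum_eq : ∀ {M : Type} [AddCommMonoid M] (f : Fin N₀ → M),
      ∑ i, f ((e.symm i : F) : Fin N₀) = ∑ k ∈ F, f k := by
    intro M _ f
    rw [← Finset.sum_coe_sort F f]
    exact Fintype.sum_equiv e.symm _ _ (fun i => rfl)
  have hqsum : ∑ i, q i = 1 := by
    rw [hq, hsum_eq, hF, Finset.sum_filter_ne_zero, hp1]
  have hΦV : ∀ X, Φ X = ∑ i, (q i : ℂ) • (V i * X * (V i)ᴴ) := by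
    intro X
    rw [hΦX X, hq, hV]
    rw [hsum_eq (fun k => (p k : ℂ) • (U k * X * (U k)ᴴ))]
    symm
    apply Finset.sum_subset (Finset.filter_subset _ _)
    intro k _ hk
    simp only [Finset.mem_filter, Finset.mem_univ, true_and, not_not] at hk
    rw [hk]
    simp
  have hdecV : IsMixedUnitaryDecomp Φ q V :=
    ⟨fun i => hp0 _, hqsum, fun i => hUuni _, hΦV⟩
  have hqne : ∀ i, q i ≠ 0 := by
    intro i
    have h2 := (e.symm i).2
    simp only [hF, Finset.mem_filter, Finset.mem_univ, true_and] at h2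
    exact h2
  by_cases hsle : s ≤ r * r - r + 1
  · exact ⟨s, hsle, q, V, hdecV⟩
  · have hrangeV : Set.range V = U '' {k | p k ≠ 0} := by
      ext x
      constructor
      · rintro ⟨i, rfl⟩
        have hmem := (e.symm i).2
        simp only [hF, Finset.mem_filter, Finset.mem_univ, true_and] at hmem
        exact ⟨_, hmem, rfl⟩
      · rintro ⟨k, hk, rfl⟩
        have hkF : k ∈ F := by
          simp only [hF, Finset.mem_filter, Finset.mem_univ, true_and]
          exact hk
        refine ⟨e ⟨k, hkF⟩, ?_⟩
        rw [hV]
        dsimp only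
        rw [Equiv.symm_apply_apply]
    have hrV : Module.finrank ℂ (Submodule.span ℂ (Set.range V)) ≤ r := by
      rw [hrangeV]; exact hrk
    obtain ⟨c, ⟨k₁, hk₁⟩, hcsum, hc0⟩ := lemC V (fun i => hUuni _) hrV (by omega)
    have hpos : ∃ i, 0 < c i := by
      by_contra h
      push_neg at h
      have hlt : c k₁ < 0 := lt_of_le_of_ne (h k₁) hk₁
      have : ∑ i, c i < ∑ _i : Fin s, (0:ℝ) :=
        Finset.sum_lt_sum (fun i _ => h i) ⟨k₁, Finset.mem_univ _, hlt⟩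
      rw [hcsum] at this
      simp at this
    set P := (Finset.univ.filter fun i => 0 < c i) with hP
    have hPne : P.Nonempty := by
      obtain ⟨i, hi⟩ := hpos
      exact ⟨i, by rw [hP, Finset.mem_filter]; exact ⟨Finset.mem_univ _, hi⟩⟩
    obtain ⟨k₀, hk₀P, hk₀min⟩ := Finset.exists_min_image P (fun i => q i / c i) hPne
    have hck₀ : 0 < c k₀ := (Finset.mem_filter.mp hk₀P).2
    have hqk₀ : 0 < q k₀ := lt_of_le_of_ne (hp0 _) (Ne.symm (hqne k₀))
    set t₀ := q k₀ / c k₀ with ht₀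
    have ht₀pos : 0 < t₀ := div_pos hqk₀ hck₀
    set p' : Fin s → ℝ := fun i => q i - t₀ * c i with hp'
    have hp'0 : ∀ i, 0 ≤ p' i := by
      intro i
      rcases le_or_gt (c i) 0 with hci | hci
      · have : t₀ * c i ≤ 0 := mul_nonpos_of_nonneg_of_nonpos ht₀pos.le hci
        have := hp0 (e.symm i)
        rw [hp']
        dsimp only
        have hqi : 0 ≤ q i := hp0 _
        linarith
      · have hmin := hk₀min i (by rw [hP, Finset.mem_filter]; exact ⟨Finset.mem_univ _, hci⟩)
        rw [hp']
        dsimp only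
        rw [sub_nonneg]
        calc t₀ * c i ≤ (q i / c i) * c i := by
              apply mul_le_mul_of_nonneg_right hmin hci.le
          _ = q i := div_mul_cancel₀ _ (ne_of_gt hci)
    have hp's : ∑ i, p' i = 1 := by
      rw [hp']
      rw [Finset.sum_sub_distrib, ← Finset.mul_sum, hcsum, hqsum]
      ring
    have hΦ' : ∀ X, Φ X = ∑ i, (p' i : ℂ) • (V i * X * (V i)ᴴ) := by
      intro X
      have expand : ∑ i, (p' i : ℂ) • (V i * X * (V i)ᴴ)
          = ∑ i, (q i : ℂ) • (V i * X * (V i)ᴴ)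
            - (t₀ : ℂ) • ∑ i, (c i : ℂ) • (V i * X * (V i)ᴴ) := by
        rw [Finset.smul_sum, ← Finset.sum_sub_distrib]
        refine Finset.sum_congr rfl fun i _ => ?_
        rw [hp']
        push_cast
        rw [sub_smul, smul_smul]
      rw [expand, hc0 X, smul_zero, sub_zero]
      exact hΦV X
    have hdec' : IsMixedUnitaryDecomp Φ p' V := ⟨hp'0, hp's, fun i => hUuni _, hΦ'⟩
    have hk₀0 : p' k₀ = 0 := by
      rw [hp']
      dsimp only
      rw [ht₀, div_mul_cancel₀ _ (ne_of_gt hck₀), sub_self]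
    have hsub : (Finset.univ.filter fun i => p' i ≠ 0) ⊆ Finset.univ.erase k₀ := by
      intro i hi
      rw [Finset.mem_filter] at hi
      rw [Finset.mem_erase]
      refine ⟨?_, Finset.mem_univ _⟩
      intro hik
      subst hik
      exact hi.2 hk₀0
    have hcard' : (Finset.univ.filter fun i => p' i ≠ 0).card < s := by
      have h1 := Finset.card_le_card hsub
      have h2 : (Finset.univ.erase k₀).card = s - 1 := by
        rw [Finset.card_erase_of_mem (Finset.mem_univ _)]
        simp
      omega
    have hspan' : Module.finrank ℂ
        (Submodule.span ℂ (V '' {i | p' i ≠ 0})) ≤ r := by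
      refine le_trans ?_ hrV
      apply Submodule.finrank_mono
      apply Submodule.span_mono
      rintro x ⟨i, _, rfl⟩
      exact ⟨i, rfl⟩
    exact ih _ hcard' s p' V hdec' rfl hspan'

end AuxStmt2

/-- Every mixed-unitary channel with Choi rank `r` and mixed-unitary
rank `N` satisfies `N ≤ r² - r + 1`. -/
theorem stmt2 (n : ℕ) (hn : 0 < n)
    (Φ : Mat (Fin n) →ₗ[ℂ] Mat (Fin n)) (hΦ : IsMixedUnitary Φ)
    (r N : ℕ) (hr : r = choiRank Φ) (hN : N = mixedUnitaryRank Φ) :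
    N ≤ r ^ 2 - r + 1 := by
  obtain ⟨N₀, p, U, hd⟩ := hΦ
  have hB := choiRank_eq Φ p U hd.1 hd.2.2.2
  have hle : Module.finrank ℂ (Submodule.span ℂ (U '' {k | p k ≠ 0})) ≤ r :=
    le_of_eq (by rw [hr, hB])
  obtain ⟨t, ht, q, V, hdec⟩ :=
    reduce Φ r ((Finset.univ.filter fun k => p k ≠ 0).card) N₀ p U hd rfl hle
  have hN' : mixedUnitaryRank Φ ≤ t := Nat.sInf_le ⟨q, V, hdec⟩
  have hpow : r ^ 2 = r * r := sq r
  omega
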